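/- Fix real numbers d > 0, β > 0, c > 0 and set λ_1 = (−c + √(c² + 4βd))/(2d) and λ_2 = (c + √(c² + 4βd))/(2d), so that −λ_1 and λ_2 are the two roots of dλ² − cλ − β = 0. For a bounded continuous H : ℝ → ℝ define T[H](ξ) = (1/(d(λ_1 + λ_2))) (∫_{−∞}^{ξ} e^{−λ_1(ξ−s)} H(s) ds + ∫_{ξ}^{∞} e^{λ_2(ξ−s)} H(s) ds). Let 𝒩 > 0 and let H : ℝ → ℝ be continuous with 0 ≤ H(s) ≤ 𝒩 for all s. Then for every ξ ∈ ℝ and every δ > 0, |T[H](ξ + δ) − T[H](ξ)| ≤ max(|e^{−λ_1 δ} − 1|, |e^{λ_2 δ} − 1|) · 𝒩/β + δ 𝒩/(d(λ_1 + λ_2)) + δ e^{λ_2 δ} 𝒩/(d(λ_1 + λ_2)). In particular, T[H](ξ + δ) − T[H](ξ) → 0 as δ → 0, uniformly in ξ and uniformly over all such H. -/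

import Mathlib

open MeasureTheory Set
set_option maxHeartbeats 2000000

namespace Stmt18Aux

lemma exp_mul_integrableOn_Iic {l : ℝ} (hl : 0 < l) (ξ : ℝ) :
    IntegrableOn (fun s => Real.exp (l * s)) (Iic ξ) := by
  have h1 : Integrable ((Iic (l * ξ)).indicator Real.exp) := by
    rw [integrable_indicator_iff measurableSet_Iic]
    exact integrableOn_exp_Iic _
  have h2 : Integrable (fun x => ((Iic (l * ξ)).indicator Real.exp) (l * x)) :=
    (MeasureTheory.integrable_comp_mul_left_iff _ hl.ne').mpr h1
  have h3 : (fun x => ((Iic (l * ξ)).indicator Real.exp) (l * x))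
      = (Iic ξ).indicator (fun s => Real.exp (l * s)) := by
    ext x
    by_cases hx : x ≤ ξ
    · simp [indicator_of_mem, hx, (mul_le_mul_iff_right₀ hl).mpr hx, Set.indicator_apply]
    · have : ¬ l * x ≤ l * ξ := fun h => hx ((mul_le_mul_iff_right₀ hl).mp h)
      simp [Set.indicator_apply, hx, this]
  rw [← integrable_indicator_iff measurableSet_Iic, ← h3]
  exact h2

lemma exp_neg_mul_integrableOn_Ici {l : ℝ} (hl : 0 < l) (ξ : ℝ) :
    IntegrableOn (fun s => Real.exp (-(l * s))) (Ici ξ) := by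
  have h1 : Integrable ((Iic (-(l * ξ))).indicator Real.exp) := by
    rw [integrable_indicator_iff measurableSet_Iic]
    exact integrableOn_exp_Iic _
  have h2 : Integrable (fun x => ((Iic (-(l * ξ))).indicator Real.exp) (-l * x)) :=
    (MeasureTheory.integrable_comp_mul_left_iff _ (neg_ne_zero.mpr hl.ne')).mpr h1
  have h3 : (fun x => ((Iic (-(l * ξ))).indicator Real.exp) (-l * x))
      = (Ici ξ).indicator (fun s => Real.exp (-(l * s))) := by
    ext x
    simp only [Set.indicator_apply, Set.mem_Iic, Set.mem_Ici, neg_mul]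
    by_cases hx : ξ ≤ x
    · rw [if_pos (show -(l * x) ≤ -(l * ξ) by nlinarith), if_pos hx]
    · rw [if_neg (show ¬ -(l * x) ≤ -(l * ξ) by push_neg at hx ⊢; nlinarith), if_neg hx]
  rw [← integrable_indicator_iff measurableSet_Ici, ← h3]
  exact h2

lemma integral_exp_Iic_kernel {l : ℝ} (hl : 0 < l) (ξ : ℝ) :
    (∫ s in Iic ξ, Real.exp (-l * (ξ - s))) = 1 / l := by
  have key := integral_comp_neg_Iic ξ (fun x => Real.exp (-(l * (ξ + x))))
  have e1 : (∫ s in Iic ξ, Real.exp (-l * (ξ - s)))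
      = ∫ x in Iic ξ, Real.exp (-(l * (ξ + -x))) := by
    congr 1; ext s; ring_nf
  rw [e1, key]
  have key2 := MeasureTheory.integral_comp_mul_left_Ioi
    (fun y => Real.exp (-(l * ξ) - y)) (-ξ) hl
  have e2 : (∫ x in Ioi (-ξ), Real.exp (-(l * (ξ + x))))
      = ∫ x in Ioi (-ξ), Real.exp (-(l * ξ) - l * x) := by
    congr 1; ext x; ring_nf
  rw [e2, key2]
  have h3 : (∫ x in Ioi (l * -ξ), Real.exp (-(l * ξ) - x))
      = Real.exp (-(l * ξ)) * ∫ x in Ioi (l * -ξ), Real.exp (-x) := by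
    rw [← integral_const_mul]; congr 1; ext x; rw [← Real.exp_add]; ring_nf
  rw [h3, integral_exp_neg_Ioi, smul_eq_mul, ← Real.exp_add]
  rw [show -(l * ξ) + -(l * -ξ) = 0 by ring, Real.exp_zero]
  simp [one_div]

lemma integral_exp_Ici_kernel {l : ℝ} (hl : 0 < l) (ξ : ℝ) :
    (∫ s in Ici ξ, Real.exp (l * (ξ - s))) = 1 / l := by
  rw [integral_Ici_eq_integral_Ioi]
  have key2 := MeasureTheory.integral_comp_mul_left_Ioi
    (fun y => Real.exp (l * ξ - y)) ξ hl
  have e2 : (∫ x in Ioi ξ, Real.exp (l * (ξ - x)))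
      = ∫ x in Ioi ξ, Real.exp (l * ξ - l * x) := by
    congr 1; ext x; ring_nf
  rw [e2, key2]
  have h3 : (∫ x in Ioi (l * ξ), Real.exp (l * ξ - x))
      = Real.exp (l * ξ) * ∫ x in Ioi (l * ξ), Real.exp (-x) := by
    rw [← integral_const_mul]; congr 1; ext x; rw [← Real.exp_add]; ring_nf
  rw [h3, integral_exp_neg_Ioi, smul_eq_mul, ← Real.exp_add]
  rw [show l * ξ + -(l * ξ) = 0 by ring, Real.exp_zero]
  simp [one_div]

lemma kernel_integrableOn_Iic {l : ℝ} (hl : 0 < l) (ξ : ℝ) :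
    IntegrableOn (fun s => Real.exp (-l * (ξ - s))) (Iic ξ) := by
  have h := (exp_mul_integrableOn_Iic hl ξ).const_mul (Real.exp (-(l * ξ)))
  have e : (fun s => Real.exp (-l * (ξ - s)))
      = fun s => Real.exp (-(l * ξ)) * Real.exp (l * s) := by
    ext s; rw [← Real.exp_add]; ring_nf
  rw [e]; exact h

lemma kernel_integrableOn_Ici {l : ℝ} (hl : 0 < l) (ξ : ℝ) :
    IntegrableOn (fun s => Real.exp (l * (ξ - s))) (Ici ξ) := by
  have h := (exp_neg_mul_integrableOn_Ici hl ξ).const_mul (Real.exp (l * ξ))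
  have e : (fun s => Real.exp (l * (ξ - s)))
      = fun s => Real.exp (l * ξ) * Real.exp (-(l * s)) := by
    ext s; rw [← Real.exp_add]; ring_nf
  rw [e]; exact h

lemma mul_H_integrableOn {k H : ℝ → ℝ} {s : Set ℝ} {NN : ℝ}
    (hk : IntegrableOn k s) (hH : Continuous H) (hb : ∀ x, 0 ≤ H x ∧ H x ≤ NN) :
    IntegrableOn (fun x => k x * H x) s := by
  have e : (fun x => k x * H x) = fun x => H x * k x := by ext x; ring
  rw [e]
  exact hk.bdd_mul hH.aestronglyMeasurable.restrict
    (Filter.Eventually.of_forall fun x => by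
      rw [Real.norm_eq_abs]
      exact abs_le.mpr ⟨by linarith [(hb x).1, (hb x).2], (hb x).2⟩)

lemma Tdiff_bound (d β NN l₁ l₂ : ℝ) (hd : 0 < d) (hβ : 0 < β) (hNN : 0 < NN)
    (hl₁ : 0 < l₁) (hl₂ : 0 < l₂) (hmul : d * (l₁ * l₂) = β)
    (H : ℝ → ℝ) (hH : Continuous H) (hb : ∀ s, 0 ≤ H s ∧ H s ≤ NN)
    (ξ δ : ℝ) (hδ : 0 < δ) :
    |(1 / (d * (l₁ + l₂))) *
        ((∫ s in Iic (ξ + δ), Real.exp (-l₁ * (ξ + δ - s)) * H s) +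
         (∫ s in Ici (ξ + δ), Real.exp (l₂ * (ξ + δ - s)) * H s)) -
      (1 / (d * (l₁ + l₂))) *
        ((∫ s in Iic ξ, Real.exp (-l₁ * (ξ - s)) * H s) +
         (∫ s in Ici ξ, Real.exp (l₂ * (ξ - s)) * H s))| ≤
      max |Real.exp (-l₁ * δ) - 1| |Real.exp (l₂ * δ) - 1| * (NN / β)
        + δ * NN / (d * (l₁ + l₂)) + δ * Real.exp (l₂ * δ) * NN / (d * (l₁ + l₂)) := by
  have hsum : 0 < l₁ + l₂ := by linarith
  have hK : 0 < 1 / (d * (l₁ + l₂)) := by positivity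
  have hξδ : ξ ≤ ξ + δ := by linarith
  -- integrability facts
  have hi1 : IntegrableOn (fun s => Real.exp (-l₁ * (ξ - s)) * H s) (Iic ξ) :=
    mul_H_integrableOn (kernel_integrableOn_Iic hl₁ ξ) hH hb
  have hi1' : IntegrableOn (fun s => Real.exp (-l₁ * (ξ + δ - s)) * H s) (Iic ξ) :=
    (mul_H_integrableOn (kernel_integrableOn_Iic hl₁ (ξ + δ)) hH hb).mono_set
      (Iic_subset_Iic.mpr hξδ)
  have hiIoc : IntegrableOn (fun s => Real.exp (-l₁ * (ξ + δ - s)) * H s) (Ioc ξ (ξ + δ)) :=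
    Continuous.integrableOn_Ioc (by fun_prop)
  have hi2 : IntegrableOn (fun s => Real.exp (l₂ * (ξ - s)) * H s) (Ici ξ) :=
    mul_H_integrableOn (kernel_integrableOn_Ici hl₂ ξ) hH hb
  have hi2sub : IntegrableOn (fun s => Real.exp (l₂ * (ξ - s)) * H s) (Ici (ξ + δ)) :=
    hi2.mono_set (Ici_subset_Ici.mpr hξδ)
  have hiIco : IntegrableOn (fun s => Real.exp (l₂ * (ξ - s)) * H s) (Ico ξ (ξ + δ)) :=
    hi2.mono_set Ico_subset_Ici_self
  -- splitting identities
  have hsplit1 : (∫ s in Iic (ξ + δ), Real.exp (-l₁ * (ξ + δ - s)) * H s)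
      = (∫ s in Iic ξ, Real.exp (-l₁ * (ξ + δ - s)) * H s)
        + ∫ s in Ioc ξ (ξ + δ), Real.exp (-l₁ * (ξ + δ - s)) * H s := by
    rw [← Set.Iic_union_Ioc_eq_Iic hξδ]
    exact setIntegral_union (Set.Iic_disjoint_Ioc le_rfl) measurableSet_Ioc hi1' hiIoc
  have hsplit2 : (∫ s in Ici ξ, Real.exp (l₂ * (ξ - s)) * H s)
      = (∫ s in Ico ξ (ξ + δ), Real.exp (l₂ * (ξ - s)) * H s)
        + ∫ s in Ici (ξ + δ), Real.exp (l₂ * (ξ - s)) * H s := by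
    rw [← Set.Ico_union_Ici_eq_Ici hξδ]
    exact setIntegral_union ((Set.Iio_disjoint_Ici le_rfl).mono_left Set.Ico_subset_Iio_self)
      measurableSet_Ici hiIco hi2sub
  -- shifting identities
  have hshift1 : (∫ s in Iic ξ, Real.exp (-l₁ * (ξ + δ - s)) * H s)
      = Real.exp (-l₁ * δ) * ∫ s in Iic ξ, Real.exp (-l₁ * (ξ - s)) * H s := by
    rw [← integral_const_mul]
    refine setIntegral_congr_fun measurableSet_Iic fun s _ => ?_
    rw [← mul_assoc, ← Real.exp_add]
    rw [show -l₁ * δ + -l₁ * (ξ - s) = -l₁ * (ξ + δ - s) by ring]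
  have hshift2 : (∫ s in Ici (ξ + δ), Real.exp (l₂ * (ξ + δ - s)) * H s)
      = Real.exp (l₂ * δ) * ∫ s in Ici (ξ + δ), Real.exp (l₂ * (ξ - s)) * H s := by
    rw [← integral_const_mul]
    refine setIntegral_congr_fun measurableSet_Ici fun s _ => ?_
    rw [← mul_assoc, ← Real.exp_add]
    rw [show l₂ * δ + l₂ * (ξ - s) = l₂ * (ξ + δ - s) by ring]
  set K := 1 / (d * (l₁ + l₂)) with hKdef
  set A := ∫ s in Iic ξ, Real.exp (-l₁ * (ξ - s)) * H s with hAdef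
  set B := ∫ s in Ici ξ, Real.exp (l₂ * (ξ - s)) * H s with hBdef
  set E₁ := ∫ s in Ioc ξ (ξ + δ), Real.exp (-l₁ * (ξ + δ - s)) * H s with hE1def
  set E₂ := ∫ s in Ico ξ (ξ + δ), Real.exp (l₂ * (ξ - s)) * H s with hE2def
  set B' := ∫ s in Ici (ξ + δ), Real.exp (l₂ * (ξ - s)) * H s with hB'def
  have hB' : B' = B - E₂ := by rw [hsplit2]; ring
  set e := Real.exp (-l₁ * δ) with hedef
  set f := Real.exp (l₂ * δ) with hfdef
  have hf0 : 0 < f := Real.exp_pos _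
  set M := max |e - 1| |f - 1| with hMdef
  have hM0 : 0 ≤ M := le_trans (abs_nonneg _) (le_max_left _ _)
  -- rewrite the difference
  have hdiff : (K * ((∫ s in Iic (ξ + δ), Real.exp (-l₁ * (ξ + δ - s)) * H s)
        + (∫ s in Ici (ξ + δ), Real.exp (l₂ * (ξ + δ - s)) * H s)) - K * (A + B))
      = K * ((e - 1) * A + (f - 1) * B + E₁ - f * E₂) := by
    rw [hsplit1, hshift1, hshift2, hB']
    ring
  rw [hdiff]
  -- pointwise bounds
  have hA0 : 0 ≤ A :=
    setIntegral_nonneg measurableSet_Iic fun s _ =>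
      mul_nonneg (Real.exp_pos _).le (hb s).1
  have hB0 : 0 ≤ B :=
    setIntegral_nonneg measurableSet_Ici fun s _ =>
      mul_nonneg (Real.exp_pos _).le (hb s).1
  have hE10 : 0 ≤ E₁ :=
    setIntegral_nonneg measurableSet_Ioc fun s _ =>
      mul_nonneg (Real.exp_pos _).le (hb s).1
  have hE20 : 0 ≤ E₂ :=
    setIntegral_nonneg measurableSet_Ico fun s _ =>
      mul_nonneg (Real.exp_pos _).le (hb s).1
  have hA1 : A ≤ 1 / l₁ * NN := by
    have hk1 : IntegrableOn (fun s => Real.exp (-l₁ * (ξ - s)) * NN) (Iic ξ) :=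
      (kernel_integrableOn_Iic hl₁ ξ).mul_const NN
    have h := setIntegral_mono_on hi1 hk1 measurableSet_Iic
      (fun s _ => mul_le_mul_of_nonneg_left (hb s).2 (Real.exp_pos _).le)
    rwa [integral_mul_const, integral_exp_Iic_kernel hl₁] at h
  have hB1 : B ≤ 1 / l₂ * NN := by
    have hk2 : IntegrableOn (fun s => Real.exp (l₂ * (ξ - s)) * NN) (Ici ξ) :=
      (kernel_integrableOn_Ici hl₂ ξ).mul_const NN
    have h := setIntegral_mono_on hi2 hk2 measurableSet_Ici
      (fun s _ => mul_le_mul_of_nonneg_left (hb s).2 (Real.exp_pos _).le)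
    rwa [integral_mul_const, integral_exp_Ici_kernel hl₂] at h
  have hvolIoc : (volume (Ioc ξ (ξ + δ))).toReal = δ := by
    rw [Real.volume_Ioc, ENNReal.toReal_ofReal (by linarith)]; ring
  have hvolIco : (volume (Ico ξ (ξ + δ))).toReal = δ := by
    rw [Real.volume_Ico, ENNReal.toReal_ofReal (by linarith)]; ring
  have hE11 : E₁ ≤ δ * NN := by
    have hconst : IntegrableOn (fun _ : ℝ => NN) (Ioc ξ (ξ + δ)) :=
      integrableOn_const (by rw [Real.volume_Ioc]; exact ENNReal.ofReal_ne_top)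
    have h := setIntegral_mono_on hiIoc hconst measurableSet_Ioc (fun s hs => by
      have h1 : Real.exp (-l₁ * (ξ + δ - s)) ≤ 1 := by
        rw [Real.exp_le_one_iff]
        have := hs.2
        nlinarith
      have := mul_le_mul h1 (hb s).2 (hb s).1 one_pos.le
      linarith)
    rwa [setIntegral_const, Measure.real, hvolIoc, smul_eq_mul] at h
  have hE21 : E₂ ≤ δ * NN := by
    have hconst : IntegrableOn (fun _ : ℝ => NN) (Ico ξ (ξ + δ)) :=
      integrableOn_const (by rw [Real.volume_Ico]; exact ENNReal.ofReal_ne_top)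
    have h := setIntegral_mono_on hiIco hconst measurableSet_Ico (fun s hs => by
      have h1 : Real.exp (l₂ * (ξ - s)) ≤ 1 := by
        rw [Real.exp_le_one_iff]
        have := hs.1
        nlinarith
      have := mul_le_mul h1 (hb s).2 (hb s).1 one_pos.le
      linarith)
    rwa [setIntegral_const, Measure.real, hvolIco, smul_eq_mul] at h
  -- combine
  have hXb : |(e - 1) * A + (f - 1) * B + E₁ - f * E₂|
      ≤ M * (1 / l₁ * NN) + M * (1 / l₂ * NN) + δ * NN + f * (δ * NN) := by
    have h1 : |(e - 1) * A + (f - 1) * B + E₁ - f * E₂|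
        ≤ |e - 1| * A + |f - 1| * B + E₁ + f * E₂ := by
      calc |(e - 1) * A + (f - 1) * B + E₁ - f * E₂|
          ≤ |(e - 1) * A + (f - 1) * B + E₁| + |f * E₂| := abs_sub _ _
        _ ≤ |(e - 1) * A + (f - 1) * B| + |E₁| + |f * E₂| := by
            gcongr; exact abs_add_le _ _
        _ ≤ |(e - 1) * A| + |(f - 1) * B| + |E₁| + |f * E₂| := by
            gcongr; exact abs_add_le _ _
        _ = |e - 1| * A + |f - 1| * B + E₁ + f * E₂ := by
            rw [abs_mul, abs_mul, abs_mul, abs_of_nonneg hA0, abs_of_nonneg hB0,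
              abs_of_nonneg hE10, abs_of_nonneg hE20, abs_of_pos hf0]
    refine h1.trans ?_
    have t1 : |e - 1| * A ≤ M * (1 / l₁ * NN) :=
      mul_le_mul (le_max_left _ _) hA1 hA0 hM0
    have t2 : |f - 1| * B ≤ M * (1 / l₂ * NN) :=
      mul_le_mul (le_max_right _ _) hB1 hB0 hM0
    have t4 : f * E₂ ≤ f * (δ * NN) := by
      exact mul_le_mul_of_nonneg_left hE21 hf0.le
    linarith
  calc |K * ((e - 1) * A + (f - 1) * B + E₁ - f * E₂)|
      = K * |(e - 1) * A + (f - 1) * B + E₁ - f * E₂| := by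
        rw [abs_mul, abs_of_pos hK]
    _ ≤ K * (M * (1 / l₁ * NN) + M * (1 / l₂ * NN) + δ * NN + f * (δ * NN)) :=
        mul_le_mul_of_nonneg_left hXb hK.le
    _ = M * (NN / β) + δ * NN / (d * (l₁ + l₂)) + δ * f * NN / (d * (l₁ + l₂)) := by
        rw [← hmul, hKdef]
        field_simp
        ring
    _ = M * (NN / β) + δ * NN / (d * (l₁ + l₂)) + δ * f * NN / (d * (l₁ + l₂)) := rfl

end Stmt18Aux



open MeasureTheory

/-- The scalar integral operator `T` of (4.13):
`T[H](ξ) = (1/(d(λ₁+λ₂))) (∫_{-∞}^{ξ} e^{-λ₁(ξ-s)} H(s) ds + ∫_{ξ}^{∞} e^{λ₂(ξ-s)} H(s) ds)`,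
where `-λ₁, λ₂` are the roots of `dλ² - cλ - β = 0`. -/
noncomputable def Tsc (d β c : ℝ) (H : ℝ → ℝ) (ξ : ℝ) : ℝ :=
  let l₁ : ℝ := (-c + Real.sqrt (c ^ 2 + 4 * β * d)) / (2 * d)
  let l₂ : ℝ := (c + Real.sqrt (c ^ 2 + 4 * β * d)) / (2 * d)
  (1 / (d * (l₁ + l₂))) *
    ((∫ s in Set.Iic ξ, Real.exp (-l₁ * (ξ - s)) * H s) +
     (∫ s in Set.Ici ξ, Real.exp (l₂ * (ξ - s)) * H s))

theorem stmt_18 (d β c NN : ℝ) (hd : 0 < d) (hβ : 0 < β) (hc : 0 < c) (hNN : 0 < NN) :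
    let l₁ : ℝ := (-c + Real.sqrt (c ^ 2 + 4 * β * d)) / (2 * d)
    let l₂ : ℝ := (c + Real.sqrt (c ^ 2 + 4 * β * d)) / (2 * d)
    (∀ H : ℝ → ℝ, Continuous H → (∀ s, 0 ≤ H s ∧ H s ≤ NN) →
      ∀ ξ δ : ℝ, 0 < δ →
        |Tsc d β c H (ξ + δ) - Tsc d β c H ξ| ≤
          max |Real.exp (-l₁ * δ) - 1| |Real.exp (l₂ * δ) - 1| * (NN / β)
          + δ * NN / (d * (l₁ + l₂)) + δ * Real.exp (l₂ * δ) * NN / (d * (l₁ + l₂))) ∧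
    (∀ ε : ℝ, 0 < ε → ∃ δ₀ : ℝ, 0 < δ₀ ∧
      ∀ H : ℝ → ℝ, Continuous H → (∀ s, 0 ≤ H s ∧ H s ≤ NN) →
        ∀ ξ δ : ℝ, 0 < δ → δ < δ₀ →
          |Tsc d β c H (ξ + δ) - Tsc d β c H ξ| < ε) := by
  intro l₁ l₂
  have harg : (0:ℝ) ≤ c ^ 2 + 4 * β * d := by positivity
  set S := Real.sqrt (c ^ 2 + 4 * β * d) with hSdef
  have hS0 : 0 ≤ S := Real.sqrt_nonneg _
  have hSsq : S ^ 2 = c ^ 2 + 4 * β * d := Real.sq_sqrt harg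
  have hcS : c < S := by nlinarith
  have hl₁ : 0 < l₁ := by
    show 0 < (-c + S) / (2 * d)
    apply div_pos (by linarith) (by linarith)
  have hl₂ : 0 < l₂ := by
    show 0 < (c + S) / (2 * d)
    apply div_pos (by linarith) (by linarith)
  have hmul : d * (l₁ * l₂) = β := by
    show d * ((-c + S) / (2 * d) * ((c + S) / (2 * d))) = β
    have h : (-c + S) * (c + S) = 4 * β * d := by nlinarith
    field_simp
    nlinarith
  have hpart1 : ∀ H : ℝ → ℝ, Continuous H → (∀ s, 0 ≤ H s ∧ H s ≤ NN) →
      ∀ ξ δ : ℝ, 0 < δ →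
        |Tsc d β c H (ξ + δ) - Tsc d β c H ξ| ≤
          max |Real.exp (-l₁ * δ) - 1| |Real.exp (l₂ * δ) - 1| * (NN / β)
          + δ * NN / (d * (l₁ + l₂)) + δ * Real.exp (l₂ * δ) * NN / (d * (l₁ + l₂)) := by
    intro H hH hb ξ δ hδ
    exact Stmt18Aux.Tdiff_bound d β NN l₁ l₂ hd hβ hNN hl₁ hl₂ hmul H hH hb ξ δ hδ
  refine ⟨hpart1, ?_⟩
  intro ε hε
  set F : ℝ → ℝ := fun t =>
    max |Real.exp (-l₁ * t) - 1| |Real.exp (l₂ * t) - 1| * (NN / β)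
      + t * NN / (d * (l₁ + l₂)) + t * Real.exp (l₂ * t) * NN / (d * (l₁ + l₂)) with hFdef
  have hFcont : Continuous F := by
    apply Continuous.add
    apply Continuous.add
    · exact (Continuous.max (by fun_prop) (by fun_prop)).mul continuous_const
    · fun_prop
    · fun_prop
  have hF0 : F 0 = 0 := by simp [hFdef]
  have hcont : ContinuousAt F 0 := hFcont.continuousAt
  rw [Metric.continuousAt_iff] at hcont
  obtain ⟨δ₀, hδ₀, hball⟩ := hcont ε hε
  refine ⟨δ₀, hδ₀, ?_⟩
  intro H hH hb ξ δ hδ hδlt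
  have h1 : |Tsc d β c H (ξ + δ) - Tsc d β c H ξ| ≤ F δ := hpart1 H hH hb ξ δ hδ
  have h2 : dist δ 0 < δ₀ := by
    rw [Real.dist_eq, sub_zero, abs_of_pos hδ]; exact hδlt
  have h3 := hball h2
  rw [Real.dist_eq, hF0, sub_zero] at h3
  exact lt_of_le_of_lt (h1.trans (le_abs_self _)) h3
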